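/- (Theorem 5.) Let q be real with 0 < q < 1, α ≥ 1 an integer, d an odd positive integer, χ a Dirichlet character modulo d, F an odd positive integer divisible by d, 0 ≤ a < F an integer, x > 0 real, and s ∈ ℂ. Then H_q^χ(s : x : a : F | α) = ( [2:q] q^a (−1)^a χ(a) / ( [2:q^F] · [F:q^α]^s ) ) · ζ̃_{E,q^F}( s, (x+a)/F | α ). -/

import Mathlib

open scoped BigOperators

/-- `[x:q] = (q^x - 1)/(q - 1)` with real exponentiation. -/
noncomputable def qNum (q x : ℝ) : ℝ := (q ^ x - 1) / (q - 1)

/-- Weighted `q`-Euler Hurwitz zeta function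
`ζ̃_{E,q}(s,y|α) = [2:q] ∑_{m≥0} (-1)^m q^m [m+y:q^α]^{-s}`. -/
noncomputable def qHurwitzZeta (q : ℝ) (α : ℕ) (s : ℂ) (y : ℝ) : ℂ :=
  (qNum q 2 : ℂ) *
    ∑' m : ℕ, (-1 : ℂ) ^ m * (q : ℂ) ^ m *
      ((qNum (q ^ α) ((m : ℝ) + y) : ℝ) : ℂ) ^ (-s)

/-- Partial Dirichlet-type zeta function
`H_q^χ(s : x : a : F | α) = [2:q] ∑_{m ≡ a (mod F)} q^m χ(m) (-1)^m [x+m:q^α]^{-s}`,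
the sum over `m ≥ 0` with `m ≡ a (mod F)` being parametrized by `m = a + F j`, `j ≥ 0`. -/
noncomputable def qPartialZeta (q : ℝ) (d : ℕ) (χ : DirichletCharacter ℂ d) (α : ℕ)
    (s : ℂ) (x : ℝ) (a F : ℕ) : ℂ :=
  (qNum q 2 : ℂ) *
    ∑' j : ℕ, (q : ℂ) ^ (a + F * j) * χ ((a + F * j : ℕ) : ZMod d) * (-1 : ℂ) ^ (a + F * j) *
      ((qNum (q ^ α) (x + ((a + F * j : ℕ) : ℝ)) : ℝ) : ℂ) ^ (-s)

lemma qNum_pos {q y : ℝ} (hq0 : 0 < q) (hq1 : q < 1) (hy : 0 < y) : 0 < qNum q y := by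
  have h1 : q ^ y < 1 := Real.rpow_lt_one hq0.le hq1 hy
  exact div_pos_of_neg_of_neg (by linarith) (by linarith)

lemma qNum_split {q : ℝ} (hq0 : 0 < q) (hq1 : q < 1) {F : ℕ} (hF : 0 < F) (y : ℝ) :
    qNum q y = qNum q F * qNum (q ^ F) (y / F) := by
  have hqF : q ^ F < 1 := pow_lt_one₀ hq0.le hq1 hF.ne'
  have hF' : (0:ℝ) < (F:ℝ) := by exact_mod_cast hF
  unfold qNum
  have h1 : (q ^ F : ℝ) ^ (y / F) = q ^ y := by
    rw [← Real.rpow_natCast q F, ← Real.rpow_mul hq0.le]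
    congr 1
    field_simp
  have hF'' : q ^ ((F:ℕ):ℝ) = q ^ F := Real.rpow_natCast q F
  rw [h1, hF'']
  rw [div_mul_div_comm, mul_comm (q - 1) (q ^ F - 1),
    mul_div_mul_left _ _ (sub_ne_zero.mpr hqF.ne)]

theorem statement10 (q : ℝ) (hq0 : 0 < q) (hq1 : q < 1) (α : ℕ) (hα : 1 ≤ α)
    (d : ℕ) (hd0 : 0 < d) (hdo : Odd d) (χ : DirichletCharacter ℂ d)
    (F : ℕ) (hF0 : 0 < F) (hFo : Odd F) (hdF : d ∣ F)
    (a : ℕ) (ha : a < F) (x : ℝ) (hx : 0 < x) (s : ℂ) :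
    qPartialZeta q d χ α s x a F =
      ((qNum q 2 : ℝ) : ℂ) * (q : ℂ) ^ a * (-1 : ℂ) ^ a * χ (a : ZMod d) /
          (((qNum (q ^ F) 2 : ℝ) : ℂ) * ((qNum (q ^ α) F : ℝ) : ℂ) ^ s) *
        qHurwitzZeta (q ^ F) α s ((x + a) / F) := by
  haveI : NeZero d := ⟨hd0.ne'⟩
  have hα0 : α ≠ 0 := by omega
  have hQ0 : 0 < q ^ α := pow_pos hq0 α
  have hQ1 : q ^ α < 1 := pow_lt_one₀ hq0.le hq1 hα0
  have hqF0 : 0 < q ^ F := pow_pos hq0 F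
  have hqF1 : q ^ F < 1 := pow_lt_one₀ hq0.le hq1 hF0.ne'
  have hF' : (0:ℝ) < (F:ℝ) := by exact_mod_cast hF0
  have hBpos : 0 < qNum (q ^ α) F := qNum_pos hQ0 hQ1 hF'
  have hCpos : 0 < qNum (q ^ F) 2 := qNum_pos hqF0 hqF1 two_pos
  set B : ℂ := ((qNum (q ^ α) F : ℝ) : ℂ) with hBdef
  have hBne : B ≠ 0 := by
    simp only [hBdef, ne_eq, Complex.ofReal_eq_zero]
    exact hBpos.ne'
  have hBs : B ^ s ≠ 0 := by
    rw [Complex.cpow_def_of_ne_zero hBne]; exact Complex.exp_ne_zero _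
  have hCne : ((qNum (q ^ F) 2 : ℝ) : ℂ) ≠ 0 := by
    simp only [ne_eq, Complex.ofReal_eq_zero]; exact hCpos.ne'
  unfold qPartialZeta qHurwitzZeta
  have hterm : ∀ j : ℕ,
      (q : ℂ) ^ (a + F * j) * χ ((a + F * j : ℕ) : ZMod d) * (-1 : ℂ) ^ (a + F * j) *
        ((qNum (q ^ α) (x + ((a + F * j : ℕ) : ℝ)) : ℝ) : ℂ) ^ (-s)
      = ((q:ℂ)^a * (-1:ℂ)^a * χ (a:ZMod d) / B ^ s) *
        ((-1:ℂ)^j * ((q^F : ℝ):ℂ)^j *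
          ((qNum ((q^F) ^ α) ((j:ℝ) + (x + a)/F) : ℝ):ℂ) ^ (-s)) := by
    intro j
    have hχ : ((a + F * j : ℕ) : ZMod d) = (a : ZMod d) := by
      push_cast
      rw [(ZMod.natCast_eq_zero_iff F d).mpr hdF]
      ring
    have hsign : (-1:ℂ) ^ (a + F * j) = (-1:ℂ)^a * (-1:ℂ)^j := by
      rw [pow_add, pow_mul, hFo.neg_one_pow]
    have hqpow : (q:ℂ) ^ (a + F * j) = (q:ℂ)^a * ((q^F : ℝ):ℂ)^j := by
      rw [pow_add, pow_mul]
      push_cast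
      ring
    have hsplit : qNum (q ^ α) (x + ((a + F * j : ℕ) : ℝ))
        = qNum (q ^ α) F * qNum ((q^F) ^ α) ((j:ℝ) + (x + a)/F) := by
      rw [qNum_split hQ0 hQ1 hF0 (x + ((a + F * j : ℕ) : ℝ)), ← pow_mul, mul_comm α F, pow_mul]
      congr 1
      push_cast
      field_simp
      ring
    rw [hχ, hsign, hqpow, hsplit]
    push_cast
    rw [Complex.mul_cpow_ofReal_nonneg hBpos.le
      (qNum_pos (pow_pos hqF0 α) (pow_lt_one₀ hqF0.le hqF1 hα0)
        (by positivity)).le, Complex.cpow_neg B s]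
    field_simp
  rw [tsum_congr hterm, tsum_mul_left]
  field_simp
  congr 1
  refine tsum_congr fun m => ?_
  ring_nf
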